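/- In the category LRF of labeled rooted forests, composition of morphisms is associative, so LRF is a category with identity morphisms (C_null, C_full, id). -/

import Mathlib

attribute [local instance] Classical.propDecidable

noncomputable section

/-- A labeled rooted forest: a finite set of vertex labels together with a
parent function (`none` = root), acyclic via a depth function. -/
structure Forest where
  verts : Finset ℕ
  parent : ℕ → Option ℕ
  parent_mem : ∀ v ∈ verts, ∀ p, parent v = some p → p ∈ verts
  wf : ∃ d : ℕ → ℕ, ∀ v ∈ verts, ∀ p, parent v = some p → d p < d v

namespace Forest

/-- `S` is the vertex set of a subforest of `F` (the branches `P_C(F)` severed by an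
admissible cut `C`): a subset of the vertices closed under passing to children. -/
def IsSub (F : Forest) (S : Finset ℕ) : Prop :=
  S ⊆ F.verts ∧ ∀ v ∈ S, ∀ w ∈ F.verts, F.parent w = some v → w ∈ S

/-- The subforest `P_C(F)` determined by the (descendant-closed) vertex set `S`. -/
def restrict (F : Forest) (S : Finset ℕ) : Forest where
  verts := S ∩ F.verts
  parent v := (F.parent v).bind fun p =>
    if v ∈ S ∩ F.verts ∧ p ∈ S ∩ F.verts then some p else none
  parent_mem := by
    intro v hv p hp
    beta_reduce at hp
    cases h : F.parent v with
    | none => rw [h] at hp; simp at hp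
    | some q =>
      rw [h] at hp
      simp only [Option.bind_some] at hp
      split at hp
      · rename_i hc; cases hp; exact hc.2
      · simp at hp
  wf := by
    obtain ⟨d, hd⟩ := F.wf
    refine ⟨d, ?_⟩
    intro v hv p hp
    beta_reduce at hp
    cases h : F.parent v with
    | none => rw [h] at hp; simp at hp
    | some q =>
      rw [h] at hp
      simp only [Option.bind_some] at hp
      split at hp
      · rename_i hc; cases hp
        exact hd v (Finset.mem_inter.mp hv).2 _ h
      · simp at hp

/-- The root part `R_C(F) = F/P_C(F)` determined by the severed vertex set `S`. -/
def quot (F : Forest) (S : Finset ℕ) : Forest where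
  verts := F.verts \ S
  parent v := (F.parent v).bind fun p =>
    if v ∈ F.verts \ S ∧ p ∈ F.verts \ S then some p else none
  parent_mem := by
    intro v hv p hp
    beta_reduce at hp
    cases h : F.parent v with
    | none => rw [h] at hp; simp at hp
    | some q =>
      rw [h] at hp
      simp only [Option.bind_some] at hp
      split at hp
      · rename_i hc; cases hp; exact hc.2
      · simp at hp
  wf := by
    obtain ⟨d, hd⟩ := F.wf
    refine ⟨d, ?_⟩
    intro v hv p hp
    beta_reduce at hp
    cases h : F.parent v with
    | none => rw [h] at hp; simp at hp
    | some q =>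
      rw [h] at hp
      simp only [Option.bind_some] at hp
      split at hp
      · rename_i hc; cases hp
        exact hd v (Finset.mem_sdiff.mp hv).1 _ h
      · simp at hp

/-- `φ` realizes an isomorphism of labeled rooted forests (a root- and
incidence-preserving bijection on labels). -/
def IsoMap (F G : Forest) (φ : ℕ → ℕ) : Prop :=
  Set.BijOn φ (F.verts : Set ℕ) (G.verts : Set ℕ) ∧
    ∀ v ∈ F.verts, (F.parent v).map φ = G.parent (φ v)

/-- Isomorphism of labeled rooted forests. -/
def Iso (F G : Forest) : Prop := ∃ φ, IsoMap F G φ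

/-- A function on forests which only depends on the isomorphism class. -/
def Invariant (f : Forest → ℚ) : Prop := ∀ F G, Iso F G → f F = f G

/-- A function on forests supported on finitely many isomorphism classes. -/
def FinSupp (f : Forest → ℚ) : Prop :=
  ∃ s : Finset Forest, ∀ F, f F ≠ 0 → ∃ G ∈ s, Iso F G

/-- The Ringel-Hall convolution product:
`(f × g)(F) = ∑_{G ⊆ F} f(G) · g(F/G)`, the sum running over subforests of `F`. -/
def conv (f g : Forest → ℚ) : Forest → ℚ := fun F =>
  ∑ S ∈ F.verts.powerset, if F.IsSub S then f (F.restrict S) * g (F.quot S) else 0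

end Forest

end

namespace Forest

/-- A (raw) morphism datum in the category `LRF`: a triple `(C₁, C₂, f)`. -/
structure Mor where
  cut1 : Finset ℕ
  cut2 : Finset ℕ
  map : ℕ → ℕ

/-- `(C₁, C₂, f)` is a morphism `F → G` in `LRF`: `C₁` is an admissible cut of `F`
(recorded by the severed vertex set), `C₂` one of `G`, and `f` an isomorphism
`R_{C₁}(F) ≅ P_{C₂}(G)`. -/
def IsMor (F G : Forest) (m : Mor) : Prop :=
  F.IsSub m.cut1 ∧ G.IsSub m.cut2 ∧
    IsoMap (F.quot m.cut1) (G.restrict m.cut2) m.map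

/-- Composition of morphisms in `LRF` (`m : F → F₂` followed by `n : F₂ → F₃`):
the cut of `n` is pulled back through `m` to a cut `E₁ ≥ C₁` of `F`, and the new
image is the image of `R_{E₁}(F)` under the composite map. -/
noncomputable def Mor.comp (F : Forest) (m n : Mor) : Mor :=
  ⟨m.cut1 ∪ ((F.quot m.cut1).verts.filter fun v => m.map v ∈ n.cut1),
   ((F.quot (m.cut1 ∪ ((F.quot m.cut1).verts.filter fun v => m.map v ∈ n.cut1))).verts).image
     (n.map ∘ m.map),
   n.map ∘ m.map⟩

/-- The identity morphism `(C_null, C_full, id)` of `F`. -/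
def idMor (F : Forest) : Mor := ⟨∅, F.verts, id⟩

/-- Equality of morphisms out of `F` (the map only matters on `R_{C₁}(F)`). -/
def MorEq (F : Forest) (m n : Mor) : Prop :=
  m.cut1 = n.cut1 ∧ m.cut2 = n.cut2 ∧
    ∀ v ∈ (F.quot m.cut1).verts, m.map v = n.map v

/-- The zero morphisms `F → G`: morphisms with empty image (factoring through `∅`). -/
def IsZeroMor (F G : Forest) (m : Mor) : Prop := IsMor F G m ∧ m.cut2 = ∅

end Forest
namespace Forest

lemma quot_verts (F : Forest) (S : Finset ℕ) : (F.quot S).verts = F.verts \ S := rfl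

lemma restrict_verts (F : Forest) (S : Finset ℕ) : (F.restrict S).verts = S ∩ F.verts := rfl

lemma quot_parent (F : Forest) (S : Finset ℕ) (v : ℕ) :
    (F.quot S).parent v = (F.parent v).bind fun p =>
      if v ∈ F.verts \ S ∧ p ∈ F.verts \ S then some p else none := rfl

lemma restrict_parent (F : Forest) (S : Finset ℕ) (v : ℕ) :
    (F.restrict S).parent v = (F.parent v).bind fun p =>
      if v ∈ S ∩ F.verts ∧ p ∈ S ∩ F.verts then some p else none := rfl

lemma quot_parent_some {F : Forest} {S : Finset ℕ} {v p : ℕ} :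
    (F.quot S).parent v = some p ↔
      F.parent v = some p ∧ v ∈ F.verts \ S ∧ p ∈ F.verts \ S := by
  rw [quot_parent]
  cases h : F.parent v with
  | none => simp
  | some q =>
    simp only [h, Option.bind_some, Option.some.injEq]
    split
    · rename_i hc
      simp only [Option.some.injEq]
      constructor
      · rintro rfl; exact ⟨rfl, hc⟩
      · rintro ⟨rfl, _⟩; rfl
    · rename_i hc
      simp only [reduceCtorEq, false_iff, not_and]
      rintro rfl h2 h3
      exact hc ⟨h2, h3⟩

lemma restrict_parent_some {F : Forest} {S : Finset ℕ} {v p : ℕ} :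
    (F.restrict S).parent v = some p ↔
      F.parent v = some p ∧ v ∈ S ∩ F.verts ∧ p ∈ S ∩ F.verts := by
  rw [restrict_parent]
  cases h : F.parent v with
  | none => simp
  | some q =>
    simp only [h, Option.bind_some, Option.some.injEq]
    split
    · rename_i hc
      simp only [Option.some.injEq]
      constructor
      · rintro rfl; exact ⟨rfl, hc⟩
      · rintro ⟨rfl, _⟩; rfl
    · rename_i hc
      simp only [reduceCtorEq, false_iff, not_and]
      rintro rfl h2 h3
      exact hc ⟨h2, h3⟩

end Forest
namespace Forest

theorem comp_isMor {F1 F2 F3 : Forest} {m n : Mor}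
    (hm : IsMor F1 F2 m) (hn : IsMor F2 F3 n) :
    IsMor F1 F3 (Mor.comp F1 m n) := by
  obtain ⟨hm1, hm2, hmB, hmP⟩ := hm
  obtain ⟨hn1, hn2, hnB, hnP⟩ := hn
  have memE : ∀ v, v ∈ (Mor.comp F1 m n).cut1 ↔
      v ∈ m.cut1 ∨ (v ∈ F1.verts ∧ v ∉ m.cut1 ∧ m.map v ∈ n.cut1) := by
    intro v
    simp [Mor.comp, quot_verts, Finset.mem_union, Finset.mem_filter, Finset.mem_sdiff,
      and_assoc]
  have memQE : ∀ v, v ∈ (F1.quot (Mor.comp F1 m n).cut1).verts ↔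
      (v ∈ F1.verts ∧ v ∉ m.cut1 ∧ m.map v ∉ n.cut1) := by
    intro v
    rw [quot_verts, Finset.mem_sdiff, memE v]
    tauto
  have hmv : ∀ v ∈ (F1.quot m.cut1).verts, m.map v ∈ m.cut2 ∧ m.map v ∈ F2.verts := by
    intro v hv
    have h := hmB.1 (Finset.mem_coe.mpr hv)
    rw [Finset.mem_coe, restrict_verts, Finset.mem_inter] at h
    exact h
  have hnv : ∀ v ∈ (F2.quot n.cut1).verts, n.map v ∈ n.cut2 ∧ n.map v ∈ F3.verts := by
    intro v hv
    have h := hnB.1 (Finset.mem_coe.mpr hv)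
    rw [Finset.mem_coe, restrict_verts, Finset.mem_inter] at h
    exact h
  have hQ1 : ∀ v ∈ (F1.quot (Mor.comp F1 m n).cut1).verts, v ∈ (F1.quot m.cut1).verts := by
    intro v hv
    obtain ⟨h1, h2, h3⟩ := (memQE v).mp hv
    rw [quot_verts, Finset.mem_sdiff]
    exact ⟨h1, h2⟩
  have hmQ2 : ∀ v ∈ (F1.quot (Mor.comp F1 m n).cut1).verts,
      m.map v ∈ (F2.quot n.cut1).verts := by
    intro v hv
    obtain ⟨h1, h2, h3⟩ := (memQE v).mp hv
    rw [quot_verts, Finset.mem_sdiff]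
    exact ⟨(hmv v (hQ1 v hv)).2, h3⟩
  have hcut2 : (Mor.comp F1 m n).cut2 =
      Finset.image (n.map ∘ m.map) (F1.quot (Mor.comp F1 m n).cut1).verts := rfl
  have hny : ∀ v ∈ (F1.quot (Mor.comp F1 m n).cut1).verts,
      n.map (m.map v) ∈ n.cut2 ∧ n.map (m.map v) ∈ F3.verts := fun v hv => hnv _ (hmQ2 v hv)
  have hsub2a : (Mor.comp F1 m n).cut2 ⊆ F3.verts := by
    intro y hy
    rw [hcut2, Finset.mem_image] at hy
    obtain ⟨v, hv, rfl⟩ := hy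
    exact (hny v hv).2
  have hR : (F3.restrict (Mor.comp F1 m n).cut2).verts = (Mor.comp F1 m n).cut2 := by
    rw [restrict_verts, Finset.inter_eq_left]
    exact hsub2a
  -- claim: images of non-severed vertices outside m.cut2 are not in the new branch set
  have claimNC : ∀ q ∈ (F2.quot n.cut1).verts, q ∉ m.cut2 →
      n.map q ∉ (Mor.comp F1 m n).cut2 := by
    intro q hq hqc hmem
    rw [hcut2, Finset.mem_image] at hmem
    obtain ⟨t, ht, hte⟩ := hmem
    have heq : m.map t = q :=
      hnB.2.1 (Finset.mem_coe.mpr (hmQ2 t ht)) (Finset.mem_coe.mpr hq) hte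
    exact hqc (heq ▸ (hmv t (hQ1 t ht)).1)
  have claim1 : ∀ v ∈ (F1.quot (Mor.comp F1 m n).cut1).verts,
      (F2.quot n.cut1).parent (m.map v) = none →
      (F3.restrict (Mor.comp F1 m n).cut2).parent (n.map (m.map v)) = none := by
    intro v hv h0
    have hth := hnP _ (hmQ2 v hv)
    rw [h0] at hth
    have hr3 : (F3.restrict n.cut2).parent (n.map (m.map v)) = none := by rw [← hth]; rfl
    rw [restrict_parent]
    cases hf : F3.parent (n.map (m.map v)) with
    | none => rfl
    | some r =>
      simp only [Option.bind_some]
      rw [if_neg]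
      intro hc
      have hrn : r ∉ n.cut2 := by
        intro hr
        rw [restrict_parent, hf] at hr3
        simp only [Option.bind_some] at hr3
        rw [if_pos] at hr3
        · exact Option.some_ne_none r hr3
        · constructor
          · rw [Finset.mem_inter]; exact ⟨(hny v hv).1, (hny v hv).2⟩
          · rw [Finset.mem_inter]
            exact ⟨hr, F3.parent_mem _ (hny v hv).2 r hf⟩
      have hrc2 : r ∈ (Mor.comp F1 m n).cut2 := (Finset.mem_inter.mp hc.2).1
      rw [hcut2, Finset.mem_image] at hrc2
      obtain ⟨t, ht, rfl⟩ := hrc2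
      exact hrn (hny t ht).1
  have claim2 : ∀ v ∈ (F1.quot (Mor.comp F1 m n).cut1).verts, ∀ q,
      (F2.quot n.cut1).parent (m.map v) = some q → q ∉ m.cut2 →
      (F3.restrict (Mor.comp F1 m n).cut2).parent (n.map (m.map v)) = none := by
    intro v hv q hq hqm
    have hth := hnP _ (hmQ2 v hv)
    rw [hq] at hth
    have hr3 : (F3.restrict n.cut2).parent (n.map (m.map v)) = some (n.map q) := by
      rw [← hth]; rfl
    obtain ⟨hf3, _, _⟩ := restrict_parent_some.mp hr3
    have hnq : n.map q ∉ (Mor.comp F1 m n).cut2 :=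
      claimNC q (quot_parent_some.mp hq).2.2 hqm
    rw [restrict_parent, hf3]
    simp only [Option.bind_some]
    rw [if_neg]
    intro hc
    exact hnq (Finset.mem_inter.mp hc.2).1
  have claim0 : ∀ v ∈ (F1.quot (Mor.comp F1 m n).cut1).verts,
      (F2.restrict m.cut2).parent (m.map v) = none →
      (F3.restrict (Mor.comp F1 m n).cut2).parent (n.map (m.map v)) = none := by
    intro v hv h0
    obtain ⟨h1, h2, h3⟩ := (memQE v).mp hv
    have hvQ1 : v ∈ (F1.quot m.cut1).verts := hQ1 v hv
    cases hf : F2.parent (m.map v) with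
    | none =>
      apply claim1 v hv
      rw [quot_parent, hf]; rfl
    | some q =>
      have hq2 : q ∈ F2.verts := F2.parent_mem _ (hmv v hvQ1).2 q hf
      have hqm : q ∉ m.cut2 := by
        intro hq
        rw [restrict_parent, hf] at h0
        simp only [Option.bind_some] at h0
        rw [if_pos] at h0
        · exact Option.some_ne_none q h0
        · constructor
          · rw [Finset.mem_inter]; exact ⟨(hmv v hvQ1).1, (hmv v hvQ1).2⟩
          · rw [Finset.mem_inter]; exact ⟨hq, hq2⟩
      by_cases hqn : q ∈ n.cut1
      · apply claim1 v hv
        rw [quot_parent, hf]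
        simp only [Option.bind_some]
        rw [if_neg]
        intro hc
        exact (Finset.mem_sdiff.mp hc.2).2 hqn
      · apply claim2 v hv q _ hqm
        refine quot_parent_some.mpr ⟨hf, ?_, ?_⟩
        · rw [Finset.mem_sdiff]; exact ⟨(hmv v hvQ1).2, h3⟩
        · rw [Finset.mem_sdiff]; exact ⟨hq2, hqn⟩
  refine ⟨⟨?_, ?_⟩, ⟨hsub2a, ?_⟩, ⟨?_, ?_, ?_⟩, ?_⟩
  · -- cut1 ⊆ F1.verts
    intro v hv
    rcases (memE v).mp hv with h | h
    · exact hm1.1 h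
    · exact h.1
  · -- cut1 child-closed
    intro v hv w hw hpar
    rcases (memE v).mp hv with h | ⟨hv1, hv2, hv3⟩
    · exact (memE w).mpr (Or.inl (hm1.2 v h w hw hpar))
    · by_cases hwc : w ∈ m.cut1
      · exact (memE w).mpr (Or.inl hwc)
      · have hwQ : w ∈ (F1.quot m.cut1).verts := by
          rw [quot_verts, Finset.mem_sdiff]; exact ⟨hw, hwc⟩
        have hq : (F1.quot m.cut1).parent w = some v := by
          refine quot_parent_some.mpr ⟨hpar, ?_, ?_⟩
          · rw [Finset.mem_sdiff]; exact ⟨hw, hwc⟩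
          · rw [Finset.mem_sdiff]; exact ⟨hv1, hv2⟩
        have hth := hmP w hwQ
        rw [hq] at hth
        have hr : (F2.restrict m.cut2).parent (m.map w) = some (m.map v) := by
          rw [← hth]; rfl
        have hf2 := (restrict_parent_some.mp hr).1
        have hwn : m.map w ∈ n.cut1 := hn1.2 _ hv3 _ (hmv w hwQ).2 hf2
        exact (memE w).mpr (Or.inr ⟨hw, hwc, hwn⟩)
  · -- cut2 child-closed
    intro y hy w hw hpar
    rw [hcut2, Finset.mem_image] at hy
    obtain ⟨v, hv, rfl⟩ := hy
    have hyn := hny v hv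
    have hwc2 : w ∈ n.cut2 := hn2.2 _ hyn.1 w hw hpar
    have hwR : w ∈ (F3.restrict n.cut2).verts := by
      rw [restrict_verts, Finset.mem_inter]; exact ⟨hwc2, hw⟩
    obtain ⟨u, hu, huw⟩ := hnB.2.2 (Finset.mem_coe.mpr hwR)
    rw [Finset.mem_coe] at hu
    have hq3 : (F3.restrict n.cut2).parent w = some (n.map (m.map v)) := by
      refine restrict_parent_some.mpr ⟨hpar, ?_, ?_⟩
      · rw [Finset.mem_inter]; exact ⟨hwc2, hw⟩
      · rw [Finset.mem_inter]; exact ⟨hyn.1, hyn.2⟩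
    have hth := hnP u hu
    rw [huw, hq3] at hth
    obtain ⟨x, hx1, hx2⟩ := Option.map_eq_some_iff.mp hth
    obtain ⟨hfu, huQ, hxQ⟩ := quot_parent_some.mp hx1
    have hxm : x = m.map v := by
      refine hnB.2.1 ?_ (Finset.mem_coe.mpr (hmQ2 v hv)) hx2
      rw [Finset.mem_coe, quot_verts, Finset.mem_sdiff]
      exact Finset.mem_sdiff.mp hxQ
    subst hxm
    have huF2 : u ∈ F2.verts := (Finset.mem_sdiff.mp huQ).1
    have hun1 : u ∉ n.cut1 := (Finset.mem_sdiff.mp huQ).2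
    have humc : u ∈ m.cut2 := hm2.2 _ (hmv v (hQ1 v hv)).1 u huF2 hfu
    have huR2 : u ∈ (F2.restrict m.cut2).verts := by
      rw [restrict_verts, Finset.mem_inter]; exact ⟨humc, huF2⟩
    obtain ⟨t, ht, htu⟩ := hmB.2.2 (Finset.mem_coe.mpr huR2)
    rw [Finset.mem_coe] at ht
    have hr2 : (F2.restrict m.cut2).parent u = some (m.map v) := by
      refine restrict_parent_some.mpr ⟨hfu, ?_, ?_⟩
      · rw [Finset.mem_inter]; exact ⟨humc, huF2⟩
      · rw [Finset.mem_inter]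
        exact ⟨(hmv v (hQ1 v hv)).1, (hmv v (hQ1 v hv)).2⟩
    have hth2 := hmP t ht
    rw [htu, hr2] at hth2
    obtain ⟨s, hs1, hs2⟩ := Option.map_eq_some_iff.mp hth2
    obtain ⟨hft, htQ, hsQ⟩ := quot_parent_some.mp hs1
    have hsv : s = v := by
      refine hmB.2.1 ?_ (Finset.mem_coe.mpr (hQ1 v hv)) hs2
      rw [Finset.mem_coe, quot_verts, Finset.mem_sdiff]
      exact Finset.mem_sdiff.mp hsQ
    subst hsv
    have htE : t ∈ (F1.quot (Mor.comp F1 m n).cut1).verts := by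
      refine (memQE t).mpr ⟨(Finset.mem_sdiff.mp htQ).1, (Finset.mem_sdiff.mp htQ).2, ?_⟩
      rw [htu]; exact hun1
    rw [hcut2, Finset.mem_image]
    refine ⟨t, htE, ?_⟩
    show n.map (m.map t) = w
    rw [htu, huw]
  · -- MapsTo
    intro v hv
    rw [Finset.mem_coe] at hv
    rw [Finset.mem_coe, hR, hcut2, Finset.mem_image]
    exact ⟨v, hv, rfl⟩
  · -- InjOn
    intro a ha b hb he
    rw [Finset.mem_coe] at ha hb
    have h1 : m.map a = m.map b :=
      hnB.2.1 (Finset.mem_coe.mpr (hmQ2 a ha)) (Finset.mem_coe.mpr (hmQ2 b hb)) he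
    exact hmB.2.1 (Finset.mem_coe.mpr (hQ1 a ha)) (Finset.mem_coe.mpr (hQ1 b hb)) h1
  · -- SurjOn
    intro y hy
    rw [Finset.mem_coe, hR, hcut2, Finset.mem_image] at hy
    obtain ⟨v, hv, rfl⟩ := hy
    exact ⟨v, Finset.mem_coe.mpr hv, rfl⟩
  · -- parent condition
    intro v hv
    cases hq : (F1.quot (Mor.comp F1 m n).cut1).parent v with
    | some p =>
      obtain ⟨hf, hvE, hpE⟩ := quot_parent_some.mp hq
      have hvQ : v ∈ (F1.quot (Mor.comp F1 m n).cut1).verts := hvE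
      have hpQ : p ∈ (F1.quot (Mor.comp F1 m n).cut1).verts := hpE
      obtain ⟨hv1, hv2, hv3⟩ := (memQE v).mp hvQ
      obtain ⟨hp1, hp2, hp3⟩ := (memQE p).mp hpQ
      have hq1 : (F1.quot m.cut1).parent v = some p := by
        refine quot_parent_some.mpr ⟨hf, ?_, ?_⟩
        · rw [Finset.mem_sdiff]; exact ⟨hv1, hv2⟩
        · rw [Finset.mem_sdiff]; exact ⟨hp1, hp2⟩
      have hth := hmP v (hQ1 v hvQ)
      rw [hq1] at hth
      have hr2 : (F2.restrict m.cut2).parent (m.map v) = some (m.map p) := by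
        rw [← hth]; rfl
      have hf2 := (restrict_parent_some.mp hr2).1
      have hq2 : (F2.quot n.cut1).parent (m.map v) = some (m.map p) := by
        refine quot_parent_some.mpr ⟨hf2, ?_, ?_⟩
        · rw [Finset.mem_sdiff]; exact ⟨(hmv v (hQ1 v hvQ)).2, hv3⟩
        · rw [Finset.mem_sdiff]; exact ⟨(hmv p (hQ1 p hpQ)).2, hp3⟩
      have hth2 := hnP _ (hmQ2 v hvQ)
      rw [hq2] at hth2
      have hr3 : (F3.restrict n.cut2).parent (n.map (m.map v)) = some (n.map (m.map p)) := by
        rw [← hth2]; rfl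
      have hf3 := (restrict_parent_some.mp hr3).1
      have hres : (F3.restrict (Mor.comp F1 m n).cut2).parent ((n.map ∘ m.map) v)
          = some ((n.map ∘ m.map) p) := by
        refine restrict_parent_some.mpr ⟨hf3, ?_, ?_⟩
        · rw [Finset.mem_inter]
          constructor
          · rw [hcut2, Finset.mem_image]; exact ⟨v, hvQ, rfl⟩
          · exact (hny v hvQ).2
        · rw [Finset.mem_inter]
          constructor
          · rw [hcut2, Finset.mem_image]; exact ⟨p, hpQ, rfl⟩
          · exact (hny p hpQ).2
      exact hres.symm
    | none =>
      show none = (F3.restrict (Mor.comp F1 m n).cut2).parent (n.map (m.map v))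
      symm
      obtain ⟨h1, h2, h3⟩ := (memQE v).mp hv
      have hvQ1 : v ∈ (F1.quot m.cut1).verts := hQ1 v hv
      cases hf : F1.parent v with
      | none =>
        have hq1 : (F1.quot m.cut1).parent v = none := by rw [quot_parent, hf]; rfl
        have hth := hmP v hvQ1
        rw [hq1] at hth
        have h0 : (F2.restrict m.cut2).parent (m.map v) = none := by rw [← hth]; rfl
        exact claim0 v hv h0
      | some p =>
        have hpF : p ∈ F1.verts := F1.parent_mem v h1 p hf
        by_cases hpm : p ∈ m.cut1
        · have hq1 : (F1.quot m.cut1).parent v = none := by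
            rw [quot_parent, hf]
            simp only [Option.bind_some]
            rw [if_neg]
            intro hc
            exact (Finset.mem_sdiff.mp hc.2).2 hpm
          have hth := hmP v hvQ1
          rw [hq1] at hth
          have h0 : (F2.restrict m.cut2).parent (m.map v) = none := by rw [← hth]; rfl
          exact claim0 v hv h0
        · have hpE : p ∈ (Mor.comp F1 m n).cut1 := by
            by_contra hpE
            have hcon : (F1.quot (Mor.comp F1 m n).cut1).parent v = some p := by
              refine quot_parent_some.mpr ⟨hf, hv, ?_⟩
              rw [Finset.mem_sdiff]; exact ⟨hpF, hpE⟩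
            rw [hq] at hcon
            exact Option.some_ne_none p hcon.symm
          have hmp : m.map p ∈ n.cut1 := by
            rcases (memE p).mp hpE with h | h
            · exact absurd h hpm
            · exact h.2.2
          have hq1 : (F1.quot m.cut1).parent v = some p := by
            refine quot_parent_some.mpr ⟨hf, ?_, ?_⟩
            · rw [Finset.mem_sdiff]; exact ⟨h1, h2⟩
            · rw [Finset.mem_sdiff]; exact ⟨hpF, hpm⟩
          have hth := hmP v hvQ1
          rw [hq1] at hth
          have hr2 : (F2.restrict m.cut2).parent (m.map v) = some (m.map p) := by
            rw [← hth]; rfl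
          have hf2 := (restrict_parent_some.mp hr2).1
          apply claim1 v hv
          rw [quot_parent, hf2]
          simp only [Option.bind_some]
          rw [if_neg]
          intro hc
          exact (Finset.mem_sdiff.mp hc.2).2 hmp

end Forest
namespace Forest

lemma comp_cut2 (F : Forest) (a b : Mor) :
    (Mor.comp F a b).cut2 =
      Finset.image (b.map ∘ a.map) (F.quot (Mor.comp F a b).cut1).verts := rfl

theorem comp_assoc {F1 F2 F3 F4 : Forest} {m n p : Mor}
    (hm : IsMor F1 F2 m) (hn : IsMor F2 F3 n) (hp : IsMor F3 F4 p) :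
    MorEq F1 (Mor.comp F1 (Mor.comp F1 m n) p) (Mor.comp F1 m (Mor.comp F2 n p)) := by
  have hmv : ∀ v ∈ F1.verts, v ∉ m.cut1 → m.map v ∈ F2.verts := by
    intro v h1 h2
    have h := hm.2.2.1.1 (show v ∈ ((F1.quot m.cut1).verts : Set ℕ) by
      rw [Finset.mem_coe, quot_verts, Finset.mem_sdiff]; exact ⟨h1, h2⟩)
    rw [Finset.mem_coe, restrict_verts, Finset.mem_inter] at h
    exact h.2
  have hc1 : (Mor.comp F1 (Mor.comp F1 m n) p).cut1
      = (Mor.comp F1 m (Mor.comp F2 n p)).cut1 := by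
    ext v
    simp only [Mor.comp, quot_verts, Finset.mem_union, Finset.mem_filter, Finset.mem_sdiff,
      Function.comp]
    erw [Finset.mem_filter]
    simp only [Finset.mem_filter, Finset.mem_sdiff, Finset.mem_union]
    by_cases h1 : v ∈ F1.verts
    · by_cases h2 : v ∈ m.cut1
      · tauto
      · have := hmv v h1 h2; tauto
    · tauto
  refine ⟨hc1, ?_, fun v _ => rfl⟩
  rw [comp_cut2, comp_cut2, hc1]
  rfl

theorem id_isMor (F : Forest) : IsMor F F (idMor F) := by
  have h1 : (F.quot (∅ : Finset ℕ)).verts = F.verts := by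
    rw [quot_verts, Finset.sdiff_empty]
  have h2 : (F.restrict F.verts).verts = F.verts := by
    rw [restrict_verts, Finset.inter_self]
  refine ⟨⟨Finset.empty_subset _, fun v hv => absurd hv (Finset.notMem_empty v)⟩,
    ⟨Finset.Subset.refl _, fun v _ w hw _ => hw⟩, ⟨?_, fun a _ b _ h => h, ?_⟩, ?_⟩
  · intro v hv
    simp only [idMor] at hv ⊢
    rw [Finset.mem_coe, h1] at hv
    rw [Finset.mem_coe, h2]
    exact hv
  · intro y hy
    simp only [idMor] at hy ⊢
    rw [Finset.mem_coe, h2] at hy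
    exact ⟨y, by rw [Finset.mem_coe, h1]; exact hy, rfl⟩
  · intro v hv
    simp only [idMor] at hv ⊢
    rw [h1] at hv
    show Option.map id ((F.quot ∅).parent v) = (F.restrict F.verts).parent v
    cases hf : F.parent v with
    | none => rw [quot_parent, restrict_parent, hf]; rfl
    | some q =>
      have hqF := F.parent_mem v hv q hf
      rw [quot_parent, restrict_parent, hf]
      simp only [Option.bind_some]
      rw [if_pos, if_pos]
      · rfl
      · constructor
        · rw [Finset.mem_inter]; exact ⟨hv, hv⟩
        · rw [Finset.mem_inter]; exact ⟨hqF, hqF⟩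
      · constructor
        · rw [Finset.mem_sdiff]; exact ⟨hv, Finset.notMem_empty v⟩
        · rw [Finset.mem_sdiff]; exact ⟨hqF, Finset.notMem_empty q⟩

lemma image_quot_eq {F1 F2 : Forest} {m : Mor} (hm : IsMor F1 F2 m) :
    Finset.image m.map (F1.quot m.cut1).verts = m.cut2 := by
  apply Finset.coe_injective
  rw [Finset.coe_image, hm.2.2.1.image_eq, restrict_verts, Finset.coe_inter]
  exact Set.inter_eq_self_of_subset_left (by exact_mod_cast hm.2.1.1)

theorem id_comp {F1 F2 : Forest} {m : Mor} (hm : IsMor F1 F2 m) :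
    MorEq F1 (Mor.comp F1 (idMor F1) m) m := by
  have hsub1 := hm.1.1
  have hc1 : (Mor.comp F1 (idMor F1) m).cut1 = m.cut1 := by
    ext v
    by_cases h : v ∈ m.cut1
    · simp [Mor.comp, idMor, quot_verts, h, hsub1 h]
    · simp [Mor.comp, idMor, quot_verts, h]
  refine ⟨hc1, ?_, fun v _ => rfl⟩
  rw [comp_cut2, hc1]
  exact image_quot_eq hm

theorem comp_id {F1 F2 : Forest} {m : Mor} (hm : IsMor F1 F2 m) :
    MorEq F1 (Mor.comp F1 m (idMor F2)) m := by
  have hc1 : (Mor.comp F1 m (idMor F2)).cut1 = m.cut1 := by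
    ext v
    simp [Mor.comp, idMor, quot_verts]
  refine ⟨hc1, ?_, fun v _ => rfl⟩
  rw [comp_cut2, hc1]
  exact image_quot_eq hm

end Forest

open Forest in
/-- In the category `LRF` of labeled rooted forests, composition of
morphisms is well defined and associative, and `(C_null, C_full, id)` are
identity morphisms, so `LRF` is a category. -/
theorem LRF_is_category :
    (∀ (F1 F2 F3 : Forest) (m n : Mor), IsMor F1 F2 m → IsMor F2 F3 n →
      IsMor F1 F3 (Mor.comp F1 m n)) ∧
    (∀ (F1 F2 F3 F4 : Forest) (m n p : Mor),
      IsMor F1 F2 m → IsMor F2 F3 n → IsMor F3 F4 p →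
      MorEq F1 (Mor.comp F1 (Mor.comp F1 m n) p) (Mor.comp F1 m (Mor.comp F2 n p))) ∧
    (∀ F : Forest, IsMor F F (idMor F)) ∧
    (∀ (F1 F2 : Forest) (m : Mor), IsMor F1 F2 m →
      MorEq F1 (Mor.comp F1 (idMor F1) m) m ∧ MorEq F1 (Mor.comp F1 m (idMor F2)) m) :=
  ⟨fun _ _ _ _ _ hm hn => comp_isMor hm hn,
   fun _ _ _ _ _ _ _ hm hn hp => comp_assoc hm hn hp,
   fun F => id_isMor F,
   fun _ _ _ hm => ⟨id_comp hm, comp_id hm⟩⟩
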